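/- Let n ≥ 1, let P_Y be a probability measure on ℝ^n with differentiable density p_Y satisfying ‖∇p_Y(y)‖ ≤ K for all y and some K > 0, and let ỹ ∈ ℝ^n with p_Y(ỹ) = a > 0. Let (μ_y)_{y∈ℝ^n} be a family of probability measures on ℝ^m with finite first moments, and set k = a/(2K) + ‖ỹ‖. Assume: (i) there is C_k < ∞ with W₁(μ_{y₁}, μ_{y₂}) ≤ C_k‖y₁ − y₂‖ for all ‖y₁‖, ‖y₂‖ ≤ k; (ii) P_Z is a probability measure on ℝ^d and G : ℝ^n × ℝ^d → ℝ^m is such that every pushforward G(y,·)_#P_Z has finite first moment, y ↦ G(y,z) is differentiable with ‖∇_y G(y,z)‖ ≤ L_k for all z ∈ supp(P_Z) and all ‖y‖ ≤ k, for some L_k > 0; (iii) the function y ↦ W₁(μ_y, G(y,·)_#P_Z) is measurable and ∫ W₁(μ_y, G(y,·)_#P_Z) dP_Y(y) ≤ ε for some ε > 0. Then W₁(μ_{ỹ}, G(ỹ,·)_#P_Z) ≤ (L_k + C_k)·a/(2K) + 2ε/(S_n (a/(2K))^n a), where S_n = π^{n/2}/Γ(n/2 + 1). -/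

import Mathlib

open MeasureTheory Filter Topology Matrix

/-- The Wasserstein-1 distance: infimum over couplings of the expected distance. -/
noncomputable def W1 {E : Type*} [MeasurableSpace E] [NormedAddCommGroup E]
    (μ ν : Measure E) : ℝ :=
  (⨅ π ∈ {π : Measure (E × E) |
      π.map Prod.fst = μ ∧ π.map Prod.snd = ν ∧ IsProbabilityMeasure π},
    ∫⁻ p, ‖p.1 - p.2‖₊ ∂π).toReal

/-- A measure has finite first moment. -/
def HasFiniteFirstMoment {E : Type*} [MeasurableSpace E] [NormedAddCommGroup E]
    (μ : Measure E) : Prop :=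
  ∫⁻ x, ‖x‖₊ ∂μ ≠ ⊤

/-- Lebesgue volume of the unit ball in ℝ^n. -/
noncomputable def Sn (n : ℕ) : ℝ := Real.pi ^ ((n : ℝ) / 2) / Real.Gamma ((n : ℝ) / 2 + 1)

/-- The (topological) support of a measure: points all of whose open neighborhoods
have positive measure. -/
def measSupport {E : Type*} [TopologicalSpace E] [MeasurableSpace E]
    (μ : Measure E) : Set E := {x | ∀ U : Set E, IsOpen U → x ∈ U → 0 < μ U}

open ProbabilityTheory
open scoped ENNReal NNReal

section W1Aux

variable {E : Type*} [MeasurableSpace E] [NormedAddCommGroup E]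

/-- The extended-real Wasserstein-1 distance. -/
noncomputable def eW1 (μ ν : Measure E) : ℝ≥0∞ :=
  ⨅ π ∈ {π : Measure (E × E) |
      π.map Prod.fst = μ ∧ π.map Prod.snd = ν ∧ IsProbabilityMeasure π},
    ∫⁻ p, ‖p.1 - p.2‖₊ ∂π

lemma W1_eq_eW1 (μ ν : Measure E) : W1 μ ν = (eW1 μ ν).toReal := rfl

lemma eW1_le_cost {μ ν : Measure E} {π : Measure (E × E)}
    (h1 : π.map Prod.fst = μ) (h2 : π.map Prod.snd = ν) (h3 : IsProbabilityMeasure π) :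
    eW1 μ ν ≤ ∫⁻ p, ‖p.1 - p.2‖₊ ∂π :=
  iInf₂_le π ⟨h1, h2, h3⟩

variable [BorelSpace E]

lemma cost_ne_top {μ ν : Measure E} {π : Measure (E × E)}
    (h1 : π.map Prod.fst = μ) (h2 : π.map Prod.snd = ν)
    (hμ : HasFiniteFirstMoment μ) (hν : HasFiniteFirstMoment ν) :
    ∫⁻ p, (‖p.1 - p.2‖₊ : ℝ≥0∞) ∂π ≠ ⊤ := by
  have hb : ∫⁻ p, (‖p.1 - p.2‖₊ : ℝ≥0∞) ∂π ≤
      ∫⁻ p, ((‖p.1‖₊ : ℝ≥0∞) + ‖p.2‖₊) ∂π := by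
    refine lintegral_mono fun p => ?_
    have := nnnorm_sub_le p.1 p.2
    calc ((‖p.1 - p.2‖₊ : ℝ≥0∞)) ≤ ((‖p.1‖₊ + ‖p.2‖₊ : ℝ≥0) : ℝ≥0∞) := by exact_mod_cast this
      _ = (‖p.1‖₊ : ℝ≥0∞) + ‖p.2‖₊ := by push_cast; ring
  have hsplit : ∫⁻ p, ((‖p.1‖₊ : ℝ≥0∞) + ‖p.2‖₊) ∂π =
      (∫⁻ p, (‖p.1‖₊ : ℝ≥0∞) ∂π) + ∫⁻ p, (‖p.2‖₊ : ℝ≥0∞) ∂π :=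
    lintegral_add_left (measurable_fst.nnnorm.coe_nnreal_ennreal) _
  have h1' : ∫⁻ p, (‖p.1‖₊ : ℝ≥0∞) ∂π = ∫⁻ x, (‖x‖₊ : ℝ≥0∞) ∂μ := by
    rw [← h1, lintegral_map measurable_nnnorm.coe_nnreal_ennreal measurable_fst]
  have h2' : ∫⁻ p, (‖p.2‖₊ : ℝ≥0∞) ∂π = ∫⁻ x, (‖x‖₊ : ℝ≥0∞) ∂ν := by
    rw [← h2, lintegral_map measurable_nnnorm.coe_nnreal_ennreal measurable_snd]
  refine ne_top_of_le_ne_top ?_ (hb.trans hsplit.le)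
  rw [h1', h2']
  exact ENNReal.add_ne_top.2 ⟨hμ, hν⟩

set_option linter.unusedSectionVars false in
lemma isCoupling_prod (μ ν : Measure E) [IsProbabilityMeasure μ] [IsProbabilityMeasure ν] :
    (μ.prod ν).map Prod.fst = μ ∧ (μ.prod ν).map Prod.snd = ν ∧
      IsProbabilityMeasure (μ.prod ν) :=
  ⟨Measure.fst_prod, Measure.snd_prod, inferInstance⟩

lemma eW1_ne_top {μ ν : Measure E} [IsProbabilityMeasure μ] [IsProbabilityMeasure ν]
    (hμ : HasFiniteFirstMoment μ) (hν : HasFiniteFirstMoment ν) :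
    eW1 μ ν ≠ ⊤ := by
  obtain ⟨h1, h2, h3⟩ := isCoupling_prod μ ν
  exact ne_top_of_le_ne_top (cost_ne_top h1 h2 hμ hν) (eW1_le_cost h1 h2 h3)

lemma ofReal_W1 {μ ν : Measure E} [IsProbabilityMeasure μ] [IsProbabilityMeasure ν]
    (hμ : HasFiniteFirstMoment μ) (hν : HasFiniteFirstMoment ν) :
    ENNReal.ofReal (W1 μ ν) = eW1 μ ν := by
  rw [W1_eq_eW1, ENNReal.ofReal_toReal (eW1_ne_top hμ hν)]

end W1Aux

section Glue

lemma lintegral_prod_fst' {α β : Type*} [MeasurableSpace α] [MeasurableSpace β]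
    (μ : Measure α) (ν : Measure β) [IsProbabilityMeasure ν] {f : α → ℝ≥0∞}
    (hf : Measurable f) : ∫⁻ p, f p.1 ∂(μ.prod ν) = ∫⁻ x, f x ∂μ := by
  have h : (μ.prod ν).map Prod.fst = μ := Measure.fst_prod
  conv_rhs => rw [← h]
  exact (lintegral_map hf measurable_fst).symm

lemma lintegral_prod_snd' {α β : Type*} [MeasurableSpace α] [MeasurableSpace β]
    (μ : Measure α) (ν : Measure β) [IsProbabilityMeasure μ] [SFinite ν] {f : β → ℝ≥0∞}
    (hf : Measurable f) : ∫⁻ p, f p.2 ∂(μ.prod ν) = ∫⁻ x, f x ∂ν := by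
  have h : (μ.prod ν).map Prod.snd = ν := Measure.snd_prod
  conv_rhs => rw [← h]
  exact (lintegral_map hf measurable_snd).symm

variable {E : Type*} [MeasurableSpace E] [NormedAddCommGroup E] [BorelSpace E]
  [SecondCountableTopology E] [StandardBorelSpace E] [Nonempty E]

/-- The gluing construction for couplings. -/
lemma exists_glue_coupling (μ ν ρ : Measure E) [IsProbabilityMeasure ν]
    {π12 π23 : Measure (E × E)}
    (h12f : π12.map Prod.fst = μ) (h12s : π12.map Prod.snd = ν) (h12p : IsProbabilityMeasure π12)
    (h23f : π23.map Prod.fst = ν) (h23s : π23.map Prod.snd = ρ) (h23p : IsProbabilityMeasure π23) :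
    ∃ M : Measure (E × E), M.map Prod.fst = μ ∧ M.map Prod.snd = ρ ∧ IsProbabilityMeasure M ∧
      ∫⁻ p, (‖p.1 - p.2‖₊ : ℝ≥0∞) ∂M ≤
        (∫⁻ p, (‖p.1 - p.2‖₊ : ℝ≥0∞) ∂π12) + ∫⁻ p, (‖p.1 - p.2‖₊ : ℝ≥0∞) ∂π23 := by
  set σ : Measure (E × E) := π12.map Prod.swap with hσdef
  haveI : IsProbabilityMeasure σ := Measure.isProbabilityMeasure_map measurable_swap.aemeasurable
  have hσf : σ.fst = ν := by
    show (π12.map Prod.swap).map Prod.fst = ν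
    rw [Measure.map_map measurable_fst measurable_swap]
    exact h12s
  have hσs : σ.snd = μ := by
    show (π12.map Prod.swap).map Prod.snd = μ
    rw [Measure.map_map measurable_snd measurable_swap]
    exact h12f
  have hπ23f : π23.fst = ν := h23f
  set κ : Kernel E E := σ.condKernel with hκdef
  set η : Kernel E E := π23.condKernel with hηdef
  have hνκ : ν ⊗ₘ κ = σ := by rw [← hσf]; exact σ.disintegrate _
  have hνη : ν ⊗ₘ η = π23 := by rw [← hπ23f]; exact π23.disintegrate _
  set ζ : Kernel E (E × E) := κ ×ₖ η with hζdef
  set T : Measure (E × (E × E)) := ν ⊗ₘ ζ with hTdef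
  haveI : IsProbabilityMeasure T := by
    constructor
    rw [hTdef, Measure.compProd_apply_univ]
    exact measure_univ
  refine ⟨T.map Prod.snd, ?_, ?_, Measure.isProbabilityMeasure_map measurable_snd.aemeasurable, ?_⟩
  · rw [Measure.map_map measurable_fst measurable_snd]
    ext s hs
    rw [Measure.map_apply (measurable_fst.comp measurable_snd) hs,
      Measure.compProd_apply ((measurable_fst.comp measurable_snd) hs)]
    have hR : μ s = ∫⁻ a, κ a s ∂ν := by
      rw [← hσs, ← hνκ]
      show ((ν ⊗ₘ κ).map Prod.snd) s = _
      rw [Measure.map_apply measurable_snd hs, Measure.compProd_apply (measurable_snd hs)]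
      rfl
    rw [hR]
    refine lintegral_congr fun a => ?_
    have hpre : (Prod.mk a ⁻¹' ((Prod.fst ∘ Prod.snd : E × E × E → E) ⁻¹' s)) =
        (Prod.fst : E × E → E) ⁻¹' s := rfl
    rw [hpre, hζdef, Kernel.prod_apply, ← Set.prod_univ, Measure.prod_prod, measure_univ, mul_one]
  · rw [Measure.map_map measurable_snd measurable_snd]
    ext s hs
    rw [Measure.map_apply (measurable_snd.comp measurable_snd) hs,
      Measure.compProd_apply ((measurable_snd.comp measurable_snd) hs)]
    have hR : ρ s = ∫⁻ a, η a s ∂ν := by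
      rw [← h23s, ← hνη]
      rw [Measure.map_apply measurable_snd hs, Measure.compProd_apply (measurable_snd hs)]
      rfl
    rw [hR]
    refine lintegral_congr fun a => ?_
    have hpre : (Prod.mk a ⁻¹' ((Prod.snd ∘ Prod.snd : E × E × E → E) ⁻¹' s)) =
        (Prod.snd : E × E → E) ⁻¹' s := rfl
    rw [hpre, hζdef, Kernel.prod_apply, ← Set.univ_prod, Measure.prod_prod, measure_univ, one_mul]
  · have hmeas : Measurable fun p : E × E => (‖p.1 - p.2‖₊ : ℝ≥0∞) :=
      (measurable_fst.sub measurable_snd).nnnorm.coe_nnreal_ennreal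
    rw [lintegral_map hmeas measurable_snd]
    have hmeas2 : Measurable fun q : E × (E × E) => (‖q.2.1 - q.2.2‖₊ : ℝ≥0∞) :=
      ((measurable_fst.comp measurable_snd).sub
        (measurable_snd.comp measurable_snd)).nnnorm.coe_nnreal_ennreal
    rw [hTdef, Measure.lintegral_compProd hmeas2]
    have hgκ : Measurable fun q : E × E => (‖q.2 - q.1‖₊ : ℝ≥0∞) :=
      (measurable_snd.sub measurable_fst).nnnorm.coe_nnreal_ennreal
    have hgη : Measurable fun q : E × E => (‖q.1 - q.2‖₊ : ℝ≥0∞) :=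
      (measurable_fst.sub measurable_snd).nnnorm.coe_nnreal_ennreal
    have hA : Measurable fun a => ∫⁻ x, (‖x - a‖₊ : ℝ≥0∞) ∂κ a :=
      Measurable.lintegral_kernel_prod_right' hgκ
    have hstep : ∀ a : E, ∫⁻ p, (‖p.1 - p.2‖₊ : ℝ≥0∞) ∂(ζ a) ≤
        (∫⁻ x, (‖x - a‖₊ : ℝ≥0∞) ∂κ a) + ∫⁻ z, (‖a - z‖₊ : ℝ≥0∞) ∂η a := by
      intro a
      rw [hζdef, Kernel.prod_apply]
      have hb : ∀ p : E × E, (‖p.1 - p.2‖₊ : ℝ≥0∞) ≤ (‖p.1 - a‖₊ : ℝ≥0∞) + ‖a - p.2‖₊ := by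
        intro p
        have h : ‖p.1 - p.2‖₊ ≤ ‖p.1 - a‖₊ + ‖a - p.2‖₊ := by
          simpa using nnnorm_add_le (p.1 - a) (a - p.2)
        calc (‖p.1 - p.2‖₊ : ℝ≥0∞) ≤ ((‖p.1 - a‖₊ + ‖a - p.2‖₊ : ℝ≥0) : ℝ≥0∞) := by
              exact_mod_cast h
          _ = (‖p.1 - a‖₊ : ℝ≥0∞) + ‖a - p.2‖₊ := by push_cast; ring
      calc ∫⁻ p, (‖p.1 - p.2‖₊ : ℝ≥0∞) ∂((κ a).prod (η a))
          ≤ ∫⁻ p, ((‖p.1 - a‖₊ : ℝ≥0∞) + ‖a - p.2‖₊) ∂((κ a).prod (η a)) :=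
            lintegral_mono hb
        _ = (∫⁻ p, (‖p.1 - a‖₊ : ℝ≥0∞) ∂((κ a).prod (η a)))
            + ∫⁻ p, (‖a - p.2‖₊ : ℝ≥0∞) ∂((κ a).prod (η a)) :=
            lintegral_add_left ((measurable_fst.sub measurable_const).nnnorm.coe_nnreal_ennreal) _
        _ = (∫⁻ x, (‖x - a‖₊ : ℝ≥0∞) ∂κ a) + ∫⁻ z, (‖a - z‖₊ : ℝ≥0∞) ∂η a := by
            congr 1
            · exact lintegral_prod_fst' (κ a) (η a)
                ((measurable_id.sub measurable_const).nnnorm.coe_nnreal_ennreal)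
            · exact lintegral_prod_snd' (κ a) (η a)
                ((measurable_const.sub measurable_id).nnnorm.coe_nnreal_ennreal)
    calc ∫⁻ a, ∫⁻ p, (‖p.1 - p.2‖₊ : ℝ≥0∞) ∂(ζ a) ∂ν
        ≤ ∫⁻ a, ((∫⁻ x, (‖x - a‖₊ : ℝ≥0∞) ∂κ a) + ∫⁻ z, (‖a - z‖₊ : ℝ≥0∞) ∂η a) ∂ν :=
          lintegral_mono hstep
      _ = (∫⁻ a, ∫⁻ x, (‖x - a‖₊ : ℝ≥0∞) ∂κ a ∂ν) + ∫⁻ a, ∫⁻ z, (‖a - z‖₊ : ℝ≥0∞) ∂η a ∂ν :=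
          lintegral_add_left hA _
      _ = (∫⁻ q : E × E, (‖q.2 - q.1‖₊ : ℝ≥0∞) ∂(ν ⊗ₘ κ))
          + ∫⁻ q : E × E, (‖q.1 - q.2‖₊ : ℝ≥0∞) ∂(ν ⊗ₘ η) := by
          congr 1
          · exact (Measure.lintegral_compProd hgκ).symm
          · exact (Measure.lintegral_compProd hgη).symm
      _ = (∫⁻ p, (‖p.1 - p.2‖₊ : ℝ≥0∞) ∂π12) + ∫⁻ p, (‖p.1 - p.2‖₊ : ℝ≥0∞) ∂π23 := by
          rw [hνκ, hνη, hσdef, lintegral_map hgκ measurable_swap]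
          rfl

lemma eW1_triangle (μ ν ρ : Measure E) [IsProbabilityMeasure ν] :
    eW1 μ ρ ≤ eW1 μ ν + eW1 ν ρ := by
  conv_rhs => rw [eW1, eW1, iInf_subtype', iInf_subtype', ENNReal.iInf_add]
  refine le_iInf fun π12 => ?_
  rw [ENNReal.add_iInf]
  refine le_iInf fun π23 => ?_
  obtain ⟨M, h1, h2, h3, h4⟩ := exists_glue_coupling μ ν ρ π12.2.1 π12.2.2.1 π12.2.2.2
    π23.2.1 π23.2.2.1 π23.2.2.2
  exact le_trans (eW1_le_cost h1 h2 h3) h4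

set_option linter.unusedSectionVars false in
lemma eW1_map_le {D : Type*} [MeasurableSpace D] (PZ : Measure D) [IsProbabilityMeasure PZ]
    {f g : D → E} (hf : Measurable f) (hg : Measurable g) :
    eW1 (PZ.map f) (PZ.map g) ≤ ∫⁻ z, (‖f z - g z‖₊ : ℝ≥0∞) ∂PZ := by
  set π := PZ.map (fun z => (f z, g z)) with hπ
  have hfg : Measurable fun z => (f z, g z) := hf.prodMk hg
  have h1 : π.map Prod.fst = PZ.map f := by
    rw [hπ, Measure.map_map measurable_fst hfg]; rfl
  have h2 : π.map Prod.snd = PZ.map g := by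
    rw [hπ, Measure.map_map measurable_snd hfg]; rfl
  haveI h3 : IsProbabilityMeasure π := Measure.isProbabilityMeasure_map hfg.aemeasurable
  refine le_trans (eW1_le_cost h1 h2 h3) ?_
  rw [hπ, lintegral_map (show Measurable fun p : E × E => (‖p.1 - p.2‖₊ : ℝ≥0∞) from
    (measurable_fst.sub measurable_snd).nnnorm.coe_nnreal_ennreal) hfg]

end Glue

lemma measSupport_compl_null {E : Type*} [TopologicalSpace E] [MeasurableSpace E]
    [SecondCountableTopology E] (μ : Measure E) : μ (measSupport μ)ᶜ = 0 := by
  set S : Set (Set E) := {U | IsOpen U ∧ μ U = 0} with hS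
  obtain ⟨T, hTc, hTS, hTU⟩ := TopologicalSpace.isOpen_sUnion_countable S fun s hs => hs.1
  have hsub : (measSupport μ)ᶜ ⊆ ⋃₀ S := by
    intro x hx
    simp only [measSupport, Set.mem_compl_iff, Set.mem_setOf_eq, not_forall] at hx
    obtain ⟨U, hUo, hxU, hU0⟩ := hx
    exact ⟨U, ⟨hUo, by simpa using hU0⟩, hxU⟩
  refine measure_mono_null hsub ?_
  rw [← hTU]
  exact (measure_sUnion_null_iff hTc).2 fun s hs => (hTS hs).2

set_option maxHeartbeats 1000000 in
/-- pointwise Wasserstein bound without the dimension scaling. -/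
theorem stmt_8 {n m d : ℕ} (hn : 1 ≤ n)
    (pY : EuclideanSpace ℝ (Fin n) → ℝ)
    (PY : Measure (EuclideanSpace ℝ (Fin n)))
    (hPYprob : IsProbabilityMeasure PY)
    (hPY : PY = volume.withDensity (fun y => ENNReal.ofReal (pY y)))
    (K : ℝ) (hK : 0 < K)
    (DY : EuclideanSpace ℝ (Fin n) → (EuclideanSpace ℝ (Fin n) →L[ℝ] ℝ))
    (hderivY : ∀ y, HasFDerivAt pY (DY y) y)
    (hDYbound : ∀ y, ‖DY y‖ ≤ K)
    (ytil : EuclideanSpace ℝ (Fin n)) (a : ℝ) (ha : 0 < a) (hpa : pY ytil = a)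
    (μ : EuclideanSpace ℝ (Fin n) → Measure (EuclideanSpace ℝ (Fin m)))
    (hμprob : ∀ y, IsProbabilityMeasure (μ y))
    (hμmom : ∀ y, HasFiniteFirstMoment (μ y))
    (k : ℝ) (hk : k = a / (2 * K) + ‖ytil‖)
    (Ck : ℝ)
    (hCk : ∀ y₁ y₂ : EuclideanSpace ℝ (Fin n), ‖y₁‖ ≤ k → ‖y₂‖ ≤ k →
      W1 (μ y₁) (μ y₂) ≤ Ck * ‖y₁ - y₂‖)
    (PZ : Measure (EuclideanSpace ℝ (Fin d))) (hPZprob : IsProbabilityMeasure PZ)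
    (G : EuclideanSpace ℝ (Fin n) → EuclideanSpace ℝ (Fin d) → EuclideanSpace ℝ (Fin m))
    (hGmeas : ∀ y : EuclideanSpace ℝ (Fin n), Measurable (G y))
    (hGmom : ∀ y : EuclideanSpace ℝ (Fin n), HasFiniteFirstMoment (PZ.map (G y)))
    (Lk : ℝ) (hLk : 0 < Lk)
    (DG : EuclideanSpace ℝ (Fin n) → EuclideanSpace ℝ (Fin d) →
      (EuclideanSpace ℝ (Fin n) →L[ℝ] EuclideanSpace ℝ (Fin m)))
    (hderivG : ∀ z ∈ measSupport PZ, ∀ y : EuclideanSpace ℝ (Fin n), ‖y‖ ≤ k →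
      HasFDerivAt (fun y' => G y' z) (DG y z) y ∧ ‖DG y z‖ ≤ Lk)
    (hWmeas : Measurable fun y => W1 (μ y) (PZ.map (G y)))
    (ε : ℝ) (hε0 : 0 < ε)
    (hint : ∫⁻ y, ENNReal.ofReal (W1 (μ y) (PZ.map (G y))) ∂PY ≤ ENNReal.ofReal ε) :
    W1 (μ ytil) (PZ.map (G ytil)) ≤
      (Lk + Ck) * (a / (2 * K)) + 2 * ε / (Sn n * (a / (2 * K)) ^ n * a) := by
  haveI : Nonempty (Fin n) := ⟨⟨0, hn⟩⟩
  set r : ℝ := a / (2 * K) with hr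
  have hr0 : 0 < r := by rw [hr]; exact div_pos ha (by linarith)
  have hSn0 : 0 < Sn n := by
    simp only [Sn]
    exact div_pos (Real.rpow_pos_of_pos Real.pi_pos _)
      (Real.Gamma_pos_of_pos (by positivity))
  set c : ℝ := 2 * ε / (Sn n * r ^ n * a) with hc
  have hc0 : 0 < c := by
    rw [hc]
    exact div_pos (by linarith) (mul_pos (mul_pos hSn0 (pow_pos hr0 n)) ha)
  have hK' : K ≠ 0 := ne_of_gt hK
  have hKr : K * r = a / 2 := by rw [hr]; field_simp
  set B : Set (EuclideanSpace ℝ (Fin n)) := Metric.closedBall ytil r with hB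
  have hBmeas : MeasurableSet B := measurableSet_closedBall
  have hpYlb : ∀ y ∈ B, a / 2 ≤ pY y := by
    intro y hy
    have hd : ‖pY y - pY ytil‖ ≤ K * ‖y - ytil‖ :=
      Convex.norm_image_sub_le_of_norm_hasFDerivWithin_le
        (fun x _ => (hderivY x).hasFDerivWithinAt) (fun x _ => hDYbound x)
        convex_univ (Set.mem_univ ytil) (Set.mem_univ y)
    have hyr : ‖y - ytil‖ ≤ r := by
      rw [← dist_eq_norm]; exact Metric.mem_closedBall.1 hy
    have h2 : |pY y - pY ytil| ≤ a / 2 := by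
      rw [← Real.norm_eq_abs]
      calc ‖pY y - pY ytil‖ ≤ K * ‖y - ytil‖ := hd
        _ ≤ K * r := by nlinarith
        _ = a / 2 := hKr
    rw [hpa] at h2
    linarith [(abs_le.1 h2).1]
  have hpYcont : Continuous pY := by
    rw [continuous_iff_continuousAt]; exact fun x => (hderivY x).continuousAt
  have hvol : volume B = ENNReal.ofReal (Sn n * r ^ n) := by
    rw [hB, EuclideanSpace.volume_closedBall, Fintype.card_fin]
    rw [← ENNReal.ofReal_pow hr0.le,
      ← ENNReal.ofReal_mul (pow_nonneg hr0.le n)]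
    congr 1
    have hsq : Real.sqrt Real.pi ^ n = Real.pi ^ ((n : ℝ) / 2) := by
      rw [← Real.rpow_natCast (Real.sqrt Real.pi) n, Real.sqrt_eq_rpow,
        ← Real.rpow_mul Real.pi_pos.le]
      congr 1
      ring
    simp only [Sn]
    rw [hsq]
    ring
  have hPYB : ENNReal.ofReal (a / 2 * (Sn n * r ^ n)) ≤ PY B := by
    rw [hPY, withDensity_apply _ hBmeas]
    calc ENNReal.ofReal (a / 2 * (Sn n * r ^ n))
        = ENNReal.ofReal (a / 2) * volume B := by
          rw [hvol, ← ENNReal.ofReal_mul (by linarith)]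
      _ = ∫⁻ _ in B, ENNReal.ofReal (a / 2) ∂volume := (setLIntegral_const B _).symm
      _ ≤ ∫⁻ y in B, ENNReal.ofReal (pY y) ∂volume :=
          setLIntegral_mono (hpYcont.measurable.ennreal_ofReal)
            fun y hy => ENNReal.ofReal_le_ofReal (hpYlb y hy)
  have hPYB' : ENNReal.ofReal ε ≤ ENNReal.ofReal c * PY B := by
    have hne1 : Sn n ≠ 0 := ne_of_gt hSn0
    have hne2 : r ^ n ≠ 0 := ne_of_gt (pow_pos hr0 n)
    have hne3 : a ≠ 0 := ne_of_gt ha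
    calc ENNReal.ofReal ε = ENNReal.ofReal c * ENNReal.ofReal (a / 2 * (Sn n * r ^ n)) := by
          rw [← ENNReal.ofReal_mul hc0.le]
          congr 1
          rw [hc]
          field_simp
      _ ≤ ENNReal.ofReal c * PY B := mul_le_mul_right hPYB _
  obtain ⟨y, hyB, hyW⟩ : ∃ y ∈ B, W1 (μ y) (PZ.map (G y)) ≤ c := by
    by_contra hcon
    push_neg at hcon
    set Bk : ℕ → Set (EuclideanSpace ℝ (Fin n)) :=
      fun j => B ∩ {x | c + 1 / ((j : ℝ) + 1) ≤ W1 (μ x) (PZ.map (G x))} with hBk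
    have hBkm : ∀ j, MeasurableSet (Bk j) := fun j =>
      hBmeas.inter (measurableSet_le measurable_const hWmeas)
    have hBU : B ⊆ ⋃ j, Bk j := by
      intro x hx
      obtain ⟨j, hj⟩ := exists_nat_one_div_lt (sub_pos.2 (hcon x hx))
      exact Set.mem_iUnion.2 ⟨j, hx, by simp only [Set.mem_setOf_eq]; linarith⟩
    have hPB0 : PY B ≠ 0 := by
      intro h0
      rw [h0, le_zero_iff, ENNReal.ofReal_eq_zero] at hPYB
      nlinarith [mul_pos (half_pos ha) (mul_pos hSn0 (pow_pos hr0 n))]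
    obtain ⟨j, hj⟩ : ∃ j, PY (Bk j) ≠ 0 := by
      by_contra hall
      push_neg at hall
      exact hPB0 (measure_mono_null hBU (measure_iUnion_null hall))
    have hdisj : Disjoint (Bk j) (B \ Bk j) := Set.disjoint_sdiff_right
    have hcup : Bk j ∪ (B \ Bk j) = B := Set.union_diff_cancel Set.inter_subset_left
    have hWm : Measurable fun x => ENNReal.ofReal (W1 (μ x) (PZ.map (G x))) :=
      hWmeas.ennreal_ofReal
    have hδ0 : (0 : ℝ) < 1 / ((j : ℝ) + 1) := by positivity
    have key : ENNReal.ofReal ε + ENNReal.ofReal (1 / ((j : ℝ) + 1)) * PY (Bk j)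
        ≤ ENNReal.ofReal ε := by
      calc ENNReal.ofReal ε + ENNReal.ofReal (1 / ((j : ℝ) + 1)) * PY (Bk j)
          ≤ ENNReal.ofReal c * PY B + ENNReal.ofReal (1 / ((j : ℝ) + 1)) * PY (Bk j) :=
            add_le_add_left hPYB' _
        _ = ENNReal.ofReal c * (PY (Bk j) + PY (B \ Bk j))
            + ENNReal.ofReal (1 / ((j : ℝ) + 1)) * PY (Bk j) := by
            rw [← measure_union hdisj (hBmeas.diff (hBkm j)), hcup]
        _ = (ENNReal.ofReal c + ENNReal.ofReal (1 / ((j : ℝ) + 1))) * PY (Bk j)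
            + ENNReal.ofReal c * PY (B \ Bk j) := by ring
        _ = ENNReal.ofReal (c + 1 / ((j : ℝ) + 1)) * PY (Bk j)
            + ENNReal.ofReal c * PY (B \ Bk j) := by
            rw [← ENNReal.ofReal_add hc0.le hδ0.le]
        _ ≤ (∫⁻ x in Bk j, ENNReal.ofReal (W1 (μ x) (PZ.map (G x))) ∂PY)
            + ∫⁻ x in B \ Bk j, ENNReal.ofReal (W1 (μ x) (PZ.map (G x))) ∂PY := by
            refine add_le_add ?_ ?_
            · calc ENNReal.ofReal (c + 1 / ((j : ℝ) + 1)) * PY (Bk j)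
                  = ∫⁻ _ in Bk j, ENNReal.ofReal (c + 1 / ((j : ℝ) + 1)) ∂PY :=
                    (setLIntegral_const _ _).symm
                _ ≤ _ := setLIntegral_mono hWm fun x hx => ENNReal.ofReal_le_ofReal hx.2
            · calc ENNReal.ofReal c * PY (B \ Bk j)
                  = ∫⁻ _ in B \ Bk j, ENNReal.ofReal c ∂PY := (setLIntegral_const _ _).symm
                _ ≤ _ := setLIntegral_mono hWm
                    fun x hx => ENNReal.ofReal_le_ofReal (hcon x hx.1).le
        _ = ∫⁻ x in B, ENNReal.ofReal (W1 (μ x) (PZ.map (G x))) ∂PY := by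
            rw [← lintegral_union (hBmeas.diff (hBkm j)) hdisj, hcup]
        _ ≤ ∫⁻ x, ENNReal.ofReal (W1 (μ x) (PZ.map (G x))) ∂PY :=
            setLIntegral_le_lintegral _ _
        _ ≤ ENNReal.ofReal ε := hint
    have hlt : ENNReal.ofReal ε < ENNReal.ofReal ε
        + ENNReal.ofReal (1 / ((j : ℝ) + 1)) * PY (Bk j) := by
      refine ENNReal.lt_add_right ENNReal.ofReal_ne_top (mul_ne_zero ?_ hj)
      simp only [ne_eq, ENNReal.ofReal_eq_zero, not_le]
      exact hδ0
    exact absurd (lt_of_lt_of_le hlt key) (lt_irrefl _)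
  -- geometry of the chosen point
  have hytilk : ‖ytil‖ ≤ k := by rw [hk]; linarith [hr0.le]
  have hd : ‖y - ytil‖ ≤ r := by
    rw [← dist_eq_norm]; exact Metric.mem_closedBall.1 hyB
  have hyk : ‖y‖ ≤ k := by
    calc ‖y‖ = ‖(y - ytil) + ytil‖ := by rw [sub_add_cancel]
      _ ≤ ‖y - ytil‖ + ‖ytil‖ := norm_add_le _ _
      _ ≤ r + ‖ytil‖ := by linarith
      _ = k := hk.symm
  have hk0 : 0 < k := by rw [hk]; have := norm_nonneg ytil; linarith
  have hCk0 : 0 ≤ Ck := by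
    set e1 : EuclideanSpace ℝ (Fin n) := EuclideanSpace.single (⟨0, hn⟩ : Fin n) (k : ℝ) with he1
    have hne1 : ‖e1‖ = k := by
      rw [he1, EuclideanSpace.norm_single, Real.norm_eq_abs, abs_of_pos hk0]
    have h0n : ‖(0 : EuclideanSpace ℝ (Fin n))‖ ≤ k := by simp [hk0.le]
    have h := hCk 0 e1 h0n (le_of_eq hne1)
    have hW0 : 0 ≤ W1 (μ 0) (μ e1) := ENNReal.toReal_nonneg
    have hnorm : ‖(0 : EuclideanSpace ℝ (Fin n)) - e1‖ = k := by
      rw [zero_sub, norm_neg, hne1]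
    rw [hnorm] at h
    nlinarith
  have hGlip : ∀ z ∈ measSupport PZ, ‖G y z - G ytil z‖ ≤ Lk * ‖y - ytil‖ := by
    intro z hz
    exact Convex.norm_image_sub_le_of_norm_hasFDerivWithin_le
      (f := fun y' => G y' z) (f' := fun y' => DG y' z) (s := Metric.closedBall 0 k)
      (fun x hx => ((hderivG z hz x (mem_closedBall_zero_iff.1 hx)).1).hasFDerivWithinAt)
      (fun x hx => (hderivG z hz x (mem_closedBall_zero_iff.1 hx)).2)
      (convex_closedBall 0 k) (mem_closedBall_zero_iff.2 hytilk) (mem_closedBall_zero_iff.2 hyk)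
  haveI := hμprob ytil
  haveI := hμprob y
  haveI : IsProbabilityMeasure (PZ.map (G y)) :=
    Measure.isProbabilityMeasure_map (hGmeas y).aemeasurable
  haveI : IsProbabilityMeasure (PZ.map (G ytil)) :=
    Measure.isProbabilityMeasure_map (hGmeas ytil).aemeasurable
  have h3 : eW1 (PZ.map (G y)) (PZ.map (G ytil)) ≤ ENNReal.ofReal (Lk * ‖y - ytil‖) := by
    refine (eW1_map_le PZ (hGmeas y) (hGmeas ytil)).trans ?_
    have hae : ∀ᵐ z ∂PZ, (‖G y z - G ytil z‖₊ : ℝ≥0∞) ≤ ENNReal.ofReal (Lk * ‖y - ytil‖) := by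
      have hnull := measSupport_compl_null PZ
      rw [ae_iff]
      refine measure_mono_null (fun z hz => ?_) hnull
      simp only [Set.mem_setOf_eq, not_le] at hz
      simp only [Set.mem_compl_iff]
      intro hzs
      rw [← ENNReal.ofReal_coe_nnreal, coe_nnnorm] at hz
      exact absurd (ENNReal.ofReal_le_ofReal (hGlip z hzs)) (not_le.2 hz)
    calc ∫⁻ z, (‖G y z - G ytil z‖₊ : ℝ≥0∞) ∂PZ
        ≤ ∫⁻ _, ENNReal.ofReal (Lk * ‖y - ytil‖) ∂PZ := lintegral_mono_ae hae
      _ = ENNReal.ofReal (Lk * ‖y - ytil‖) := by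
          rw [lintegral_const, measure_univ, mul_one]
  have h1 : eW1 (μ ytil) (μ y) ≤ ENNReal.ofReal (Ck * ‖y - ytil‖) := by
    rw [← ofReal_W1 (hμmom ytil) (hμmom y)]
    refine ENNReal.ofReal_le_ofReal ?_
    have := hCk ytil y hytilk hyk
    rwa [norm_sub_rev] at this
  have h2 : eW1 (μ y) (PZ.map (G y)) ≤ ENNReal.ofReal c := by
    rw [← ofReal_W1 (hμmom y) (hGmom y)]
    exact ENNReal.ofReal_le_ofReal hyW
  have htri : eW1 (μ ytil) (PZ.map (G ytil)) ≤
      eW1 (μ ytil) (μ y) + (eW1 (μ y) (PZ.map (G y)) + eW1 (PZ.map (G y)) (PZ.map (G ytil))) := by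
    refine (eW1_triangle _ (μ y) _).trans ?_
    exact add_le_add_right (eW1_triangle _ (PZ.map (G y)) _) _
  have hfin : eW1 (μ ytil) (PZ.map (G ytil)) ≤ ENNReal.ofReal ((Lk + Ck) * r + c) := by
    refine htri.trans ?_
    have hnn : 0 ≤ Ck * ‖y - ytil‖ := mul_nonneg hCk0 (norm_nonneg _)
    have hnn2 : 0 ≤ Lk * ‖y - ytil‖ := mul_nonneg hLk.le (norm_nonneg _)
    calc eW1 (μ ytil) (μ y) + (eW1 (μ y) (PZ.map (G y)) + eW1 (PZ.map (G y)) (PZ.map (G ytil)))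
        ≤ ENNReal.ofReal (Ck * ‖y - ytil‖)
          + (ENNReal.ofReal c + ENNReal.ofReal (Lk * ‖y - ytil‖)) :=
          add_le_add h1 (add_le_add h2 h3)
      _ = ENNReal.ofReal (Ck * ‖y - ytil‖ + (c + Lk * ‖y - ytil‖)) := by
          rw [ENNReal.ofReal_add hnn (add_nonneg hc0.le hnn2), ENNReal.ofReal_add hc0.le hnn2]
      _ ≤ ENNReal.ofReal ((Lk + Ck) * r + c) := by
          refine ENNReal.ofReal_le_ofReal ?_
          have h4 : Ck * ‖y - ytil‖ ≤ Ck * r := by nlinarith [norm_nonneg (y - ytil)]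
          have h5 : Lk * ‖y - ytil‖ ≤ Lk * r := by nlinarith [norm_nonneg (y - ytil)]
          nlinarith
  rw [W1_eq_eW1]
  have hrhs : 0 ≤ (Lk + Ck) * r + c :=
    add_nonneg (mul_nonneg (by linarith) hr0.le) hc0.le
  exact ENNReal.toReal_le_of_le_ofReal hrhs hfin
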